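/- Let F be a field of characteristic 0, let λ, μ ∈ F, and let m, n be positive integers. Let p(x,y) be a non-constant bivariate polynomial with local degree d ≥ 1 at (λ,μ), meaning all Hasse derivatives of p of order between 1 and d−1 vanish at (λ,μ) and some Hasse derivative of order d does not. Let Z = P(J_m(λ), J_n(μ)) − p(λ,μ)·I_{mn}, where P(X,Y) = ∑ a_{ij}(Xⁱ ⊗ Yʲ) and J_k(ν) = νI_k + N_k. Then Zᵏ = 0 for every integer k ≥ (m + n − 1)/d; in particular every Jordan block of P(J_m(λ), J_n(μ)) has size at most ⌈(m+n−1)/d⌉. -/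

import Mathlib

open Kronecker MvPolynomial Finset

lemma myshift_pow {F : Type*} [Field F] {m : ℕ} (k : ℕ) (i j : Fin m) :
    ((Matrix.of fun (i j : Fin m) => if (i:ℕ)+1 = (j:ℕ) then (1:F) else 0) ^ k) i j
      = if (i:ℕ) + k = (j:ℕ) then 1 else 0 := by
  induction k generalizing i j with
  | zero => simp [Matrix.one_apply, Fin.ext_iff]
  | succ b ih =>
    rw [pow_succ, Matrix.mul_apply]
    simp only [ih, Matrix.of_apply, ite_mul, one_mul, zero_mul]
    by_cases h : (i:ℕ) + b < m
    · rw [Finset.sum_eq_single (⟨(i:ℕ)+b, h⟩ : Fin m)]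
      · rw [if_pos rfl]
        simp only [Fin.val_mk, Nat.add_assoc]
      · intro l _ hl
        rw [if_neg]
        intro hc
        exact hl (Fin.ext hc.symm)
      · simp
    · rw [Finset.sum_eq_zero, eq_comm, if_neg]
      · omega
      · intro l _
        rw [if_neg]
        have := l.2
        omega

lemma mypow_zero_of_le {A : Type*} [Ring A] {N : A} {M : ℕ} (hM : N ^ M = 0)
    {b : ℕ} (h : M ≤ b) : N ^ b = 0 := by
  have : N ^ b = N ^ M * N ^ (b - M) := by rw [← pow_add]; congr 1; omega
  rw [this, hM, zero_mul]

lemma mybinom {F : Type*} [Field F] {A : Type*} [Ring A] [Algebra F A]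
    (lam : F) (N : A) (M : ℕ) (hM : N ^ M = 0) (a : ℕ) :
    (lam • (1:A) + N) ^ a =
      ∑ β ∈ Finset.range M, ((a.choose β : F) * lam ^ (a - β)) • N ^ β := by
  have hc : Commute N (lam • (1:A)) := (Commute.one_right N).smul_right lam
  have hterm : ∀ β : ℕ, N ^ β * (lam • (1:A)) ^ (a - β) * ((a.choose β : ℕ) : A)
      = ((a.choose β : F) * lam ^ (a - β)) • N ^ β := by
    intro β
    rw [smul_pow, one_pow, mul_smul_comm, mul_one]
    rw [← map_natCast (algebraMap F A), ← Algebra.commutes, Algebra.smul_def, ← mul_assoc,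
      ← map_mul, ← Algebra.smul_def, mul_comm]
  rw [add_comm, hc.add_pow]
  simp only [hterm]
  have h1 : ∑ β ∈ Finset.range (a+1), ((a.choose β : F) * lam ^ (a - β)) • N ^ β
      = ∑ β ∈ Finset.range (a+1+M), ((a.choose β : F) * lam ^ (a - β)) • N ^ β := by
    apply Finset.sum_subset (Finset.range_subset_range.2 (by omega))
    intro β _ hβ
    rw [Finset.mem_range, not_lt] at hβ
    rw [Nat.choose_eq_zero_of_lt (by omega), Nat.cast_zero, zero_mul, zero_smul]
  have h2 : ∑ β ∈ Finset.range M, ((a.choose β : F) * lam ^ (a - β)) • N ^ β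
      = ∑ β ∈ Finset.range (a+1+M), ((a.choose β : F) * lam ^ (a - β)) • N ^ β := by
    apply Finset.sum_subset (Finset.range_subset_range.2 (by omega))
    intro β _ hβ
    rw [Finset.mem_range, not_lt] at hβ
    rw [mypow_zero_of_le hM hβ, smul_zero]
  rw [h1, ← h2]

lemma mysum_kron {F : Type*} [Field F] {m n : ℕ} (s t : Finset ℕ) (f g : ℕ → F)
    (A : ℕ → Matrix (Fin m) (Fin m) F) (B : ℕ → Matrix (Fin n) (Fin n) F) :
    ((∑ β ∈ s, f β • A β) ⊗ₖ (∑ γ ∈ t, g γ • B γ))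
      = ∑ β ∈ s, ∑ γ ∈ t, (f β * g γ) • (A β ⊗ₖ B γ) := by
  ext ⟨i, i'⟩ ⟨j, j'⟩
  simp only [Matrix.kroneckerMap_apply, Matrix.sum_apply, Matrix.smul_apply, smul_eq_mul,
    Finset.sum_mul_sum]
  refine Finset.sum_congr rfl fun β _ => Finset.sum_congr rfl fun γ _ => ?_
  ring

lemma myiter_pderiv_monomial {F : Type*} [Field F] (i : Fin 2) (β : ℕ) (u : Fin 2 →₀ ℕ) (c : F) :
    (fun r => pderiv i r)^[β] (monomial u c)
      = monomial (u - Finsupp.single i β) (c * ((u i).descFactorial β : F)) := by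
  induction β with
  | zero => simp
  | succ b ih =>
    rw [Function.iterate_succ_apply', ih, pderiv_monomial]
    have h1 : (u - Finsupp.single i b) i = u i - b := by
      simp [Finsupp.tsub_apply]
    have h2 : u - Finsupp.single i b - Finsupp.single i 1 = u - Finsupp.single i (b+1) := by
      rw [tsub_tsub, ← Finsupp.single_add]
    rw [h1, h2, Nat.descFactorial_succ]
    congr 1
    push_cast
    ring

lemma myiter_pderiv_sum {F : Type*} [Field F] (i : Fin 2) (β : ℕ) {ι : Type*} (s : Finset ι)
    (f : ι → MvPolynomial (Fin 2) F) :
    (fun r => pderiv i r)^[β] (∑ x ∈ s, f x) = ∑ x ∈ s, (fun r => pderiv i r)^[β] (f x) := by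
  induction β with
  | zero => simp
  | succ b ih =>
    rw [Function.iterate_succ_apply', ih, map_sum]
    simp [Function.iterate_succ_apply']

lemma myhasse_eval {F : Type*} [Field F] [CharZero F] (lam mu : F) (β γ : ℕ)
    (u : Fin 2 →₀ ℕ) (c : F) :
    MvPolynomial.eval (fun i : Fin 2 => if i = 0 then lam else mu)
      (((β.factorial * γ.factorial : F))⁻¹ •
        ((fun r => pderiv (0:Fin 2) r)^[β] ((fun r => pderiv (1:Fin 2) r)^[γ] (monomial u c))))
    = c * (((u 0).choose β : F) * lam ^ (u 0 - β)) * (((u 1).choose γ : F) * mu ^ (u 1 - γ)) := by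
  rw [myiter_pderiv_monomial, myiter_pderiv_monomial]
  have h1 : (u - Finsupp.single (1:Fin 2) γ) 0 = u 0 := by
    simp [Finsupp.tsub_apply, Finsupp.single_apply]
  rw [h1]
  set s : Fin 2 →₀ ℕ := u - Finsupp.single 1 γ - Finsupp.single 0 β with hs
  have hs0 : s 0 = u 0 - β := by
    simp [hs, Finsupp.tsub_apply, Finsupp.single_apply]
  have hs1 : s 1 = u 1 - γ := by
    simp [hs, Finsupp.tsub_apply, Finsupp.single_apply]
  rw [smul_eq_C_mul, map_mul, eval_C, eval_monomial]
  rw [Finsupp.prod_fintype _ _ (fun i => pow_zero _), Fin.prod_univ_two, hs0, hs1]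
  simp only [if_pos rfl, if_neg (by decide : ¬ (1:Fin 2) = 0)]
  have e0 : ((u 0).descFactorial β : F) = (β.factorial : F) * ((u 0).choose β : F) := by
    rw [← Nat.cast_mul, ← Nat.descFactorial_eq_factorial_mul_choose]
  have e1 : ((u 1).descFactorial γ : F) = (γ.factorial : F) * ((u 1).choose γ : F) := by
    rw [← Nat.cast_mul, ← Nat.descFactorial_eq_factorial_mul_choose]
  rw [e0, e1]
  have hβ : (β.factorial : F) ≠ 0 := Nat.cast_ne_zero.2 β.factorial_ne_zero
  have hγ : (γ.factorial : F) ≠ 0 := Nat.cast_ne_zero.2 γ.factorial_ne_zero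
  field_simp
  rw [if_pos trivial]
  ring

theorem nilpotency_index_bound_local_degree
    {F : Type*} [Field F] [CharZero F] {m n : ℕ} (hm : 0 < m) (hn : 0 < n)
    (lam mu : F) (p : MvPolynomial (Fin 2) F) (d : ℕ) (hd1 : 1 ≤ d)
    (H : ℕ → ℕ → MvPolynomial (Fin 2) F → MvPolynomial (Fin 2) F)
    (hH : ∀ β γ q, H β γ q =
        ((β.factorial * γ.factorial : F))⁻¹ •
          ((fun r => pderiv (0 : Fin 2) r)^[β] ((fun r => pderiv (1 : Fin 2) r)^[γ] q)))
    (hlow : ∀ β γ : ℕ, 1 ≤ β + γ → β + γ < d →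
        MvPolynomial.eval (fun i : Fin 2 => if i = 0 then lam else mu) (H β γ p) = 0)
    (hnz : ∃ β γ : ℕ, β + γ = d ∧
        MvPolynomial.eval (fun i : Fin 2 => if i = 0 then lam else mu) (H β γ p) ≠ 0)
    (Jm : Matrix (Fin m) (Fin m) F)
    (hJm : Jm = Matrix.of fun (i j : Fin m) =>
        if i = j then lam else if (i : ℕ) + 1 = (j : ℕ) then 1 else 0)
    (Jn : Matrix (Fin n) (Fin n) F)
    (hJn : Jn = Matrix.of fun (i j : Fin n) =>
        if i = j then mu else if (i : ℕ) + 1 = (j : ℕ) then 1 else 0)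
    (P Z : Matrix (Fin m × Fin n) (Fin m × Fin n) F)
    (hP : P = ∑ mo ∈ p.support,
        MvPolynomial.coeff mo p • ((Jm ^ (mo 0)) ⊗ₖ (Jn ^ (mo 1))))
    (hZ : Z = P - MvPolynomial.eval (fun i : Fin 2 => if i = 0 then lam else mu) p • 1) :
    ∀ k : ℕ, m + n - 1 ≤ d * k → Z ^ k = 0 := by
  set pt : Fin 2 → F := fun i : Fin 2 => if i = 0 then lam else mu with hpt
  set Nm : Matrix (Fin m) (Fin m) F :=
    Matrix.of fun (i j : Fin m) => if (i:ℕ)+1 = (j:ℕ) then (1:F) else 0 with hNmdef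
  set Nn : Matrix (Fin n) (Fin n) F :=
    Matrix.of fun (i j : Fin n) => if (i:ℕ)+1 = (j:ℕ) then (1:F) else 0 with hNndef
  have hNm : Nm ^ m = 0 := by
    ext i j
    rw [hNmdef, myshift_pow, Matrix.zero_apply, if_neg]
    have := j.2
    omega
  have hNn : Nn ^ n = 0 := by
    ext i j
    rw [hNndef, myshift_pow, Matrix.zero_apply, if_neg]
    have := j.2
    omega
  have hJm' : Jm = lam • (1 : Matrix (Fin m) (Fin m) F) + Nm := by
    rw [hJm, hNmdef]
    ext i j
    simp only [Matrix.of_apply, Matrix.add_apply, Matrix.smul_apply, Matrix.one_apply,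
      smul_eq_mul]
    rcases eq_or_ne i j with rfl | hne
    · rw [if_pos rfl, if_pos rfl, if_neg (by omega)]
      ring
    · rw [if_neg hne, if_neg hne, mul_zero, zero_add]
  have hJn' : Jn = mu • (1 : Matrix (Fin n) (Fin n) F) + Nn := by
    rw [hJn, hNndef]
    ext i j
    simp only [Matrix.of_apply, Matrix.add_apply, Matrix.smul_apply, Matrix.one_apply,
      smul_eq_mul]
    rcases eq_or_ne i j with rfl | hne
    · rw [if_pos rfl, if_pos rfl, if_neg (by omega)]
      ring
    · rw [if_neg hne, if_neg hne, mul_zero, zero_add]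
  have hbm : ∀ a : ℕ, Jm ^ a
      = ∑ β ∈ Finset.range m, ((a.choose β : F) * lam ^ (a - β)) • Nm ^ β := by
    intro a
    rw [hJm']
    exact mybinom lam Nm m hNm a
  have hbn : ∀ a : ℕ, Jn ^ a
      = ∑ γ ∈ Finset.range n, ((a.choose γ : F) * mu ^ (a - γ)) • Nn ^ γ := by
    intro a
    rw [hJn']
    exact mybinom mu Nn n hNn a
  have ckey : ∀ β γ : ℕ, MvPolynomial.eval pt (H β γ p)
      = ∑ mo ∈ p.support, MvPolynomial.coeff mo p
          * (((mo 0).choose β : F) * lam ^ (mo 0 - β))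
          * (((mo 1).choose γ : F) * mu ^ (mo 1 - γ)) := by
    intro β γ
    rw [hH]
    conv_lhs => rw [p.as_sum]
    rw [myiter_pderiv_sum, myiter_pderiv_sum, Finset.smul_sum, map_sum]
    exact Finset.sum_congr rfl fun mo _ => myhasse_eval lam mu β γ mo (MvPolynomial.coeff mo p)
  have hPsum : P = ∑ β ∈ Finset.range m, ∑ γ ∈ Finset.range n,
      MvPolynomial.eval pt (H β γ p) • ((Nm ^ β) ⊗ₖ (Nn ^ γ)) := by
    have step1 : P = ∑ mo ∈ p.support, ∑ β ∈ Finset.range m, ∑ γ ∈ Finset.range n,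
        (MvPolynomial.coeff mo p
          * (((mo 0).choose β : F) * lam ^ (mo 0 - β))
          * (((mo 1).choose γ : F) * mu ^ (mo 1 - γ))) • ((Nm ^ β) ⊗ₖ (Nn ^ γ)) := by
      rw [hP]
      refine Finset.sum_congr rfl fun mo _ => ?_
      rw [hbm, hbn, mysum_kron, Finset.smul_sum]
      refine Finset.sum_congr rfl fun β _ => ?_
      rw [Finset.smul_sum]
      refine Finset.sum_congr rfl fun γ _ => ?_
      rw [smul_smul, ← mul_assoc]
    rw [step1, Finset.sum_comm]
    refine Finset.sum_congr rfl fun β _ => ?_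
    rw [Finset.sum_comm]
    refine Finset.sum_congr rfl fun γ _ => ?_
    rw [← Finset.sum_smul, ckey]
  have hc00 : MvPolynomial.eval pt (H 0 0 p) = MvPolynomial.eval pt p := by
    rw [hH]
    simp
  have h00mem : ((0,0) : ℕ × ℕ) ∈ Finset.range m ×ˢ Finset.range n := by
    simp [Finset.mem_product, hm, hn]
  have hZsum : Z = ∑ x ∈ (Finset.range m ×ˢ Finset.range n).erase (0,0),
      MvPolynomial.eval pt (H x.1 x.2 p) • ((Nm ^ x.1) ⊗ₖ (Nn ^ x.2)) := by
    rw [hZ, hPsum, ← Finset.sum_product', ← Finset.add_sum_erase _ _ h00mem]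
    rw [pow_zero, pow_zero, Matrix.one_kronecker_one, ← hc00]
    exact add_sub_cancel_left _ _
  set Sp : ℕ → Submodule F (Matrix (Fin m × Fin n) (Fin m × Fin n) F) := fun t =>
    Submodule.span F {M | ∃ β γ : ℕ, t ≤ β + γ ∧ M = (Nm ^ β) ⊗ₖ (Nn ^ γ)} with hSp
  have hZmem : Z ∈ Sp d := by
    rw [hZsum]
    refine Submodule.sum_mem _ fun x hx => ?_
    rcases lt_or_ge (x.1 + x.2) d with h | h
    · have hx0 : x ≠ (0,0) := (Finset.mem_erase.1 hx).1
      have h1 : 1 ≤ x.1 + x.2 := by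
        rcases Nat.eq_zero_or_pos (x.1 + x.2) with h0 | h0
        · exact absurd (Prod.ext (by omega) (by omega)) hx0
        · exact h0
      rw [hlow x.1 x.2 h1 h, zero_smul]
      exact Submodule.zero_mem _
    · exact Submodule.smul_mem _ _ (Submodule.subset_span ⟨x.1, x.2, h, rfl⟩)
  have hmul : ∀ s t : ℕ, ∀ x y, x ∈ Sp s → y ∈ Sp t → x * y ∈ Sp (s + t) := by
    intro s t x y hx hy
    have hle : Sp s * Sp t ≤ Sp (s + t) := by
      rw [hSp]
      simp only
      rw [Submodule.span_mul_span]
      refine Submodule.span_le.2 ?_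
      rintro z hz
      rw [Set.mem_mul] at hz
      obtain ⟨a, ha, b, hb, rfl⟩ := hz
      obtain ⟨β, γ, hβγ, rfl⟩ := ha
      obtain ⟨β', γ', hβγ', rfl⟩ := hb
      refine Submodule.subset_span ⟨β + β', γ + γ', by omega, ?_⟩
      rw [pow_add, pow_add, Matrix.mul_kronecker_mul]
    exact hle (Submodule.mul_mem_mul hx hy)
  have hpow : ∀ k : ℕ, Z ^ k ∈ Sp (d * k) := by
    intro k
    induction k with
    | zero =>
      rw [pow_zero, Nat.mul_zero]
      exact Submodule.subset_span ⟨0, 0, le_refl 0, by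
        rw [pow_zero, pow_zero, Matrix.one_kronecker_one]⟩
    | succ k ih =>
      rw [pow_succ, Nat.mul_succ]
      exact hmul _ _ _ _ ih hZmem
  intro k hk
  have hbot : Sp (d * k) ≤ ⊥ := by
    refine Submodule.span_le.2 ?_
    rintro z ⟨β, γ, hβγ, rfl⟩
    rw [SetLike.mem_coe, Submodule.mem_bot]
    rcases le_or_gt m β with h | h
    · rw [mypow_zero_of_le hNm h, Matrix.zero_kronecker]
    · have : n ≤ γ := by omega
      rw [mypow_zero_of_le hNn this, Matrix.kronecker_zero]
  exact Submodule.mem_bot F |>.1 (hbot (hpow k))
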